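/- Let (c_n)_{n≥1} be nonnegative reals with ∑_{n=1}^∞ c_n = 1, at least two weights nonzero, and suppose ∑_{n=1}^∞ c_n n converges to some value n. Then ∑_{i=1}^∞ ∑_{j=1}^∞ c_i c_j min(i,j) < n. -/
import Mathlib


/-- Undiscounted case: the doubly-weighted average of `min(i,j)` under a non-degenerate
probability distribution on the positive integers is strictly less than its mean `n`. -/
theorem min_double_average_lt_mean (c : ℕ → ℝ) (hc : ∀ k, 0 ≤ c k)
    (hsum : ∑' k : ℕ, c (k + 1) = 1)
    (htwo : ∃ i j : ℕ, i ≠ j ∧ c (i + 1) ≠ 0 ∧ c (j + 1) ≠ 0)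
    (n : ℝ) (hmean : Summable fun k : ℕ => c (k + 1) * ((k : ℝ) + 1))
    (hn : ∑' k : ℕ, c (k + 1) * ((k : ℝ) + 1) = n) :
    ∑' i : ℕ, ∑' j : ℕ, c (i + 1) * c (j + 1) * ((min (i + 1) (j + 1) : ℕ) : ℝ) < n := by
  obtain ⟨i₀, j₀, hij, hi₀, hj₀⟩ := htwo
  have ha : ∀ k : ℕ, 0 ≤ c (k + 1) := fun k => hc (k + 1)
  have hsa : Summable (fun k : ℕ => c (k + 1)) := by
    apply Summable.of_nonneg_of_le ha (fun k => ?_) hmean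
    nlinarith [ha k, (Nat.cast_nonneg k : (0:ℝ) ≤ (k:ℝ))]
  -- pointwise min ≤ average, strict when indices differ
  have key : ∀ i j : ℕ, ((min (i + 1) (j + 1) : ℕ) : ℝ) ≤ (((i:ℝ)+1) + ((j:ℝ)+1)) / 2 := by
    intro i j
    push_cast
    have h1 := min_add_max ((i:ℝ)+1) ((j:ℝ)+1)
    have h2 := min_le_max (a := (i:ℝ)+1) (b := (j:ℝ)+1)
    linarith
  have keylt : ((min (i₀ + 1) (j₀ + 1) : ℕ) : ℝ) < (((i₀:ℝ)+1) + ((j₀:ℝ)+1)) / 2 := by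
    have hne : ((i₀:ℝ)+1) ≠ ((j₀:ℝ)+1) := by
      have : (i₀:ℝ) ≠ (j₀:ℝ) := Nat.cast_injective.ne hij
      intro h; exact this (by linarith)
    push_cast
    have h1 := min_add_max ((i₀:ℝ)+1) ((j₀:ℝ)+1)
    have h2 : min ((i₀:ℝ)+1) ((j₀:ℝ)+1) < max ((i₀:ℝ)+1) ((j₀:ℝ)+1) := min_lt_max.mpr hne
    linarith
  -- inner summability
  have hinner : ∀ i : ℕ, Summable (fun j : ℕ =>
      c (i + 1) * c (j + 1) * ((min (i + 1) (j + 1) : ℕ) : ℝ)) := by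
    intro i
    refine Summable.of_nonneg_of_le (fun j => ?_) (fun j => ?_) (hmean.mul_left (c (i + 1)))
    · exact mul_nonneg (mul_nonneg (ha i) (ha j)) (Nat.cast_nonneg _)
    · show _ ≤ c (i + 1) * (c (j + 1) * ((j:ℝ)+1))
      have hm : ((min (i + 1) (j + 1) : ℕ) : ℝ) ≤ (j:ℝ) + 1 := by
        have : (min (i + 1) (j + 1) : ℕ) ≤ j + 1 := min_le_right _ _
        exact_mod_cast this
      calc c (i + 1) * c (j + 1) * ((min (i + 1) (j + 1) : ℕ) : ℝ)
          ≤ c (i + 1) * c (j + 1) * ((j:ℝ)+1) :=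
            mul_le_mul_of_nonneg_left hm (mul_nonneg (ha i) (ha j))
        _ = c (i + 1) * (c (j + 1) * ((j:ℝ)+1)) := by ring
  -- middle comparison function
  have hmid : ∀ i : ℕ, Summable (fun j : ℕ =>
      c (i + 1) * c (j + 1) * ((((i:ℝ)+1) + ((j:ℝ)+1)) / 2)) := by
    intro i
    have heq : (fun j : ℕ => c (i + 1) * c (j + 1) * ((((i:ℝ)+1) + ((j:ℝ)+1)) / 2))
        = fun j => (c (i + 1) * ((i:ℝ)+1) / 2) * c (j + 1)
            + (c (i + 1) / 2) * (c (j + 1) * ((j:ℝ)+1)) := by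
      funext j; ring
    rw [heq]
    exact (hsa.mul_left _).add (hmean.mul_left _)
  have hmidval : ∀ i : ℕ, (∑' j : ℕ, c (i + 1) * c (j + 1) * ((((i:ℝ)+1) + ((j:ℝ)+1)) / 2))
      = c (i + 1) * (((i:ℝ)+1) + n) / 2 := by
    intro i
    have heq : (fun j : ℕ => c (i + 1) * c (j + 1) * ((((i:ℝ)+1) + ((j:ℝ)+1)) / 2))
        = fun j => (c (i + 1) * ((i:ℝ)+1) / 2) * c (j + 1)
            + (c (i + 1) / 2) * (c (j + 1) * ((j:ℝ)+1)) := by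
      funext j; ring
    rw [heq, Summable.tsum_add (hsa.mul_left _) (hmean.mul_left _), tsum_mul_left, tsum_mul_left,
      hsum, hn]
    ring
  -- upper bounds for the inner sums
  set T : ℕ → ℝ := fun i => ∑' j : ℕ, c (i + 1) * c (j + 1) * ((min (i + 1) (j + 1) : ℕ) : ℝ)
    with hT
  set U : ℕ → ℝ := fun i => c (i + 1) * (((i:ℝ)+1) + n) / 2 with hU
  have hTU : ∀ i, T i ≤ U i := by
    intro i
    have hle : T i ≤ ∑' j : ℕ, c (i + 1) * c (j + 1) * ((((i:ℝ)+1) + ((j:ℝ)+1)) / 2) := by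
      apply Summable.tsum_le_tsum _ (hinner i) (hmid i)
      intro j
      exact mul_le_mul_of_nonneg_left (key i j) (mul_nonneg (ha i) (ha j))
    exact hle.trans_eq (hmidval i)
  have hpos : 0 < c (i₀ + 1) * c (j₀ + 1) :=
    mul_pos ((ha i₀).lt_of_ne (Ne.symm hi₀)) ((ha j₀).lt_of_ne (Ne.symm hj₀))
  have hTUlt : T i₀ < U i₀ := by
    have hlt : T i₀ < ∑' j : ℕ, c (i₀ + 1) * c (j + 1) * ((((i₀:ℝ)+1) + ((j:ℝ)+1)) / 2) := by
      apply Summable.tsum_lt_tsum (i := j₀)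
        (fun j => mul_le_mul_of_nonneg_left (key i₀ j) (mul_nonneg (ha i₀) (ha j)))
        _ (hinner i₀) (hmid i₀)
      exact (mul_lt_mul_iff_right₀ hpos).mpr keylt
    exact hlt.trans_eq (hmidval i₀)
  have hUsum : Summable U := by
    have heq : U = fun i => (c (i + 1) * ((i:ℝ)+1)) / 2 + c (i + 1) * (n / 2) := by
      funext i; simp only [hU]; ring
    rw [heq]
    exact (hmean.div_const 2).add (hsa.mul_right _)
  have hTsum : Summable T := by
    apply Summable.of_nonneg_of_le _ hTU hUsum
    intro i
    apply tsum_nonneg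
    intro j
    exact mul_nonneg (mul_nonneg (ha i) (ha j)) (Nat.cast_nonneg _)
  have hfinal : ∑' i, T i < ∑' i, U i := Summable.tsum_lt_tsum hTU hTUlt hTsum hUsum
  have hUval : ∑' i, U i = n := by
    have heq : U = fun i => (c (i + 1) * ((i:ℝ)+1)) / 2 + c (i + 1) * (n / 2) := by
      funext i; simp only [hU]; ring
    rw [heq, Summable.tsum_add (hmean.div_const 2) (hsa.mul_right _), tsum_div_const, tsum_mul_right,
      hsum, hn]
    ring
  calc ∑' i : ℕ, ∑' j : ℕ, c (i + 1) * c (j + 1) * ((min (i + 1) (j + 1) : ℕ) : ℝ)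
      = ∑' i, T i := rfl
    _ < ∑' i, U i := hfinal
    _ = n := hUval
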